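/- Let A be a linear pencil which is either weakly infeasible or weakly feasible (feasible but with no x such that A(x) ≻ 0). Then there exist k ≥ 1 and nonzero vectors u_1, ..., u_k ∈ ℝ^α such that Σ_{i=1}^k u_i^* A u_i = 0 as a polynomial. -/

import Mathlib

open MvPolynomial Matrix
attribute [local instance] Matrix.frobeniusNormedAddCommGroup

noncomputable section

abbrev RP (n : ℕ) := MvPolynomial (Fin n) ℝ

/-- Evaluation of the linear pencil `A₀ + ∑ xᵢ Aᵢ` at a point `x ∈ ℝⁿ`. -/
def pencilEval {n α : ℕ} (A0 : Matrix (Fin α) (Fin α) ℝ) (A : Fin n → Matrix (Fin α) (Fin α) ℝ)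
    (x : Fin n → ℝ) : Matrix (Fin α) (Fin α) ℝ :=
  A0 + ∑ i, x i • A i

/-- The linear pencil `A₀ + ∑ xᵢ Aᵢ` as a matrix of polynomials. -/
def pencilPoly {n α : ℕ} (A0 : Matrix (Fin α) (Fin α) ℝ) (A : Fin n → Matrix (Fin α) (Fin α) ℝ) :
    Matrix (Fin α) (Fin α) (RP n) :=
  A0.map C + ∑ i, (X i : RP n) • (A i).map C

/-- `v^* M v` for a matrix of polynomials. -/
def quadForm {n α : ℕ} (M : Matrix (Fin α) (Fin α) (RP n)) (v : Fin α → RP n) : RP n :=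
  v ⬝ᵥ (M *ᵥ v)

/-- A sum of squares of polynomials. -/
def IsSos {n : ℕ} (p : RP n) : Prop := ∃ (k : ℕ) (q : Fin k → RP n), p = ∑ i, q i ^ 2

/-- An sos-matrix: a finite sum `∑ vⱼ vⱼ^*` with `vⱼ` vectors of polynomials. -/
def IsSosMatrix {n α : ℕ} (S : Matrix (Fin α) (Fin α) (RP n)) : Prop :=
  ∃ (k : ℕ) (v : Fin k → Fin α → RP n), S = ∑ j, Matrix.vecMulVec (v j) (v j)

/-- Membership in the quadratic module `M_A` associated to the pencil. -/
def InQuadModule {n α : ℕ} (A0 : Matrix (Fin α) (Fin α) ℝ)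
    (A : Fin n → Matrix (Fin α) (Fin α) ℝ) (p : RP n) : Prop :=
  ∃ s, IsSos s ∧ ∃ (k : ℕ) (v : Fin k → Fin α → RP n),
    p = s + ∑ j, quadForm (pencilPoly A0 A) (v j)

/-- Strong infeasibility: positive distance (Frobenius norm) between the range of the
pencil and the PSD cone. -/
def StronglyInfeasible {n α : ℕ} (A0 : Matrix (Fin α) (Fin α) ℝ)
    (A : Fin n → Matrix (Fin α) (Fin α) ℝ) : Prop :=
  ∃ ε > (0:ℝ), ∀ (x : Fin n → ℝ) (B : Matrix (Fin α) (Fin α) ℝ), B.PosSemidef →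
    ε ≤ dist (pencilEval A0 A x) B

attribute [local instance] Matrix.frobeniusNormedSpace

section Aux

lemma frob_entry_le {α : ℕ} (Δ : Matrix (Fin α) (Fin α) ℝ) (i j : Fin α) : |Δ i j| ≤ ‖Δ‖ := by
  rw [Matrix.frobenius_norm_def, ← Real.sqrt_eq_rpow]
  have h2 : ∀ x : ℝ, ‖x‖ ^ (2:ℝ) = x ^ 2 := fun x => by
    rw [show (2:ℝ) = ((2:ℕ):ℝ) by norm_num, Real.rpow_natCast, Real.norm_eq_abs, sq_abs]
  simp only [h2]
  calc |Δ i j| = Real.sqrt ((Δ i j) ^ 2) := (Real.sqrt_sq_eq_abs _).symm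
    _ ≤ _ := by
      apply Real.sqrt_le_sqrt
      calc (Δ i j) ^ 2 ≤ ∑ j', (Δ i j') ^ 2 :=
            Finset.single_le_sum (f := fun j' => Δ i j' ^ 2) (fun j' _ => sq_nonneg _)
              (Finset.mem_univ j)
        _ ≤ ∑ i', ∑ j', (Δ i' j') ^ 2 :=
            Finset.single_le_sum (f := fun i' => ∑ j', (Δ i' j') ^ 2)
              (fun i' _ => Finset.sum_nonneg fun j' _ => sq_nonneg _) (Finset.mem_univ i)

lemma quad_abs_le {α : ℕ} (Δ : Matrix (Fin α) (Fin α) ℝ) (v : Fin α → ℝ)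
    (hv : ∀ i, |v i| ≤ 1) : |v ⬝ᵥ Δ *ᵥ v| ≤ (α:ℝ)^2 * ‖Δ‖ := by
  have h1 : v ⬝ᵥ Δ *ᵥ v = ∑ i, ∑ j, v i * (Δ i j * v j) := by
    simp [dotProduct, mulVec, Finset.mul_sum]
  rw [h1]
  have hn : (0:ℝ) ≤ ‖Δ‖ := norm_nonneg _
  calc |∑ i, ∑ j, v i * (Δ i j * v j)| ≤ ∑ i, ∑ j, |v i * (Δ i j * v j)| := by
        refine (Finset.abs_sum_le_sum_abs _ _).trans
          (Finset.sum_le_sum fun i _ => Finset.abs_sum_le_sum_abs _ _)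
    _ ≤ ∑ _i : Fin α, ∑ _j : Fin α, ‖Δ‖ := by
        refine Finset.sum_le_sum fun i _ => Finset.sum_le_sum fun j _ => ?_
        rw [abs_mul, abs_mul]
        have h3 : |Δ i j| * |v j| ≤ ‖Δ‖ * 1 :=
          mul_le_mul (frob_entry_le Δ i j) (hv j) (abs_nonneg _) hn
        have h4 : |v i| * (|Δ i j| * |v j|) ≤ 1 * (‖Δ‖ * 1) :=
          mul_le_mul (hv i) h3 (by positivity) (by norm_num)
        linarith
    _ = (α:ℝ)^2 * ‖Δ‖ := by simp [Finset.sum_const]; ring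

lemma isOpen_posdefset {α : ℕ} (hα : α ≠ 0) :
    IsOpen {M : Matrix (Fin α) (Fin α) ℝ | ∀ v : Fin α → ℝ, v ≠ 0 → 0 < v ⬝ᵥ M *ᵥ v} := by
  have hne : Nonempty (Fin α) := ⟨⟨0, Nat.pos_of_ne_zero hα⟩⟩
  refine Metric.isOpen_iff.mpr ?_
  intro M hM
  have hcont : Continuous fun v : Fin α → ℝ => v ⬝ᵥ M *ᵥ v := by
    unfold dotProduct mulVec
    exact continuous_finset_sum _ fun i _ => (continuous_apply i).mul
      (continuous_finset_sum _ fun j _ => (continuous_const.mul (continuous_apply j)))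
  set S := Metric.sphere (0 : Fin α → ℝ) 1 with hS
  have hSc : IsCompact S := isCompact_sphere _ _
  have hSne : S.Nonempty := by
    refine ⟨fun _ => 1, ?_⟩
    simp only [hS, Metric.mem_sphere, dist_zero_right]
    rw [pi_norm_const]
    norm_num
  obtain ⟨w0, hw0S, hw0min⟩ := hSc.exists_isMinOn hSne hcont.continuousOn
  set m := w0 ⬝ᵥ M *ᵥ w0 with hmdef
  have hnorm : ∀ w ∈ S, ‖w‖ = 1 := fun w hw => by simpa [hS] using hw
  have hw0ne : w0 ≠ 0 := by
    intro h
    have := hnorm w0 hw0S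
    rw [h] at this; simp at this
  have hm : 0 < m := hM w0 hw0ne
  refine ⟨m / ((α:ℝ)^2 + 1), by positivity, ?_⟩
  intro C hC v hvne
  have hnv : (0:ℝ) < ‖v‖ := norm_pos_iff.mpr hvne
  set w := ‖v‖⁻¹ • v with hw
  have hwS : w ∈ S := by
    simp only [hS, Metric.mem_sphere, dist_zero_right, hw, norm_smul, norm_inv, norm_norm]
    exact inv_mul_cancel₀ hnv.ne'
  have hwkey : 0 < w ⬝ᵥ C *ᵥ w := by
    have h1 : w ⬝ᵥ C *ᵥ w = w ⬝ᵥ M *ᵥ w + w ⬝ᵥ (C - M) *ᵥ w := by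
      rw [Matrix.sub_mulVec, dotProduct_sub]; ring
    have h2 : m ≤ w ⬝ᵥ M *ᵥ w := hw0min hwS
    have h3 : |w ⬝ᵥ (C - M) *ᵥ w| ≤ (α:ℝ)^2 * ‖C - M‖ := by
      refine quad_abs_le _ _ fun i => ?_
      have := norm_le_pi_norm w i
      rw [hnorm w hwS] at this
      simpa using this
    have h5 : ‖C - M‖ < m / ((α:ℝ)^2 + 1) := by
      rw [← dist_eq_norm]
      rw [Metric.mem_ball] at hC
      exact hC
    have h6 : (α:ℝ)^2 * ‖C - M‖ < m := by
      have hα2 : (0:ℝ) ≤ (α:ℝ)^2 := sq_nonneg _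
      have hp : (0:ℝ) < (α:ℝ)^2 + 1 := by positivity
      have h7 : (α:ℝ)^2 * ‖C - M‖ ≤ (α:ℝ)^2 * (m / ((α:ℝ)^2 + 1)) :=
        mul_le_mul_of_nonneg_left h5.le hα2
      have h8 : (α:ℝ)^2 * (m / ((α:ℝ)^2 + 1)) < m := by
        rw [mul_div_assoc', div_lt_iff₀ hp]
        nlinarith
      linarith
    have := abs_le.mp h3
    linarith [this.1]
  have hscale : w ⬝ᵥ C *ᵥ w = ‖v‖⁻¹ * (‖v‖⁻¹ * (v ⬝ᵥ C *ᵥ v)) := by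
    rw [hw, Matrix.mulVec_smul, smul_dotProduct, dotProduct_smul]
    simp [smul_eq_mul]
  rw [hscale] at hwkey
  have hi : (0:ℝ) < ‖v‖⁻¹ := inv_pos.mpr hnv
  nlinarith [mul_nonneg hi.le hi.le]

lemma dotProduct_self_pos' {α : ℕ} {v : Fin α → ℝ} (hv : v ≠ 0) : 0 < v ⬝ᵥ v := by
  obtain ⟨j, hj⟩ := Function.ne_iff.mp hv
  exact Finset.sum_pos' (fun i _ => mul_self_nonneg _)
    ⟨j, Finset.mem_univ j, mul_self_pos.mpr hj⟩

lemma quad_expand {R : Type*} [CommRing R] {α : ℕ} (M : Matrix (Fin α) (Fin α) R)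
    (x : Fin α → R) : x ⬝ᵥ M *ᵥ x = ∑ i, ∑ j, M i j * (x i * x j) := by
  simp only [dotProduct, mulVec, Finset.mul_sum]
  exact Finset.sum_congr rfl fun i _ => Finset.sum_congr rfl fun j _ => by ring

lemma sep_lemma {n α : ℕ} (hα : α ≠ 0) (A0 : Matrix (Fin α) (Fin α) ℝ)
    (A : Fin n → Matrix (Fin α) (Fin α) ℝ) (hA0 : A0.IsSymm) (hA : ∀ i, (A i).IsSymm)
    (hnoPD : ∀ x, ¬ (pencilEval A0 A x).PosDef) :
    ∃ f : Matrix (Fin α) (Fin α) ℝ →L[ℝ] ℝ,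
      (∀ B, B.PosSemidef → f B ≤ 0) ∧ (∀ j, f (A j) = 0) ∧
        ∃ u : ℝ, 0 ≤ u ∧ u ≤ f A0 ∧ f 1 < u := by
  classical
  set s : Set (Matrix (Fin α) (Fin α) ℝ) :=
    {M | ∀ v : Fin α → ℝ, v ≠ 0 → 0 < v ⬝ᵥ M *ᵥ v} with hsdef
  have hquad : ∀ (a : ℝ) (M N : Matrix (Fin α) (Fin α) ℝ) (v : Fin α → ℝ),
      v ⬝ᵥ (a • M + N) *ᵥ v = a * (v ⬝ᵥ M *ᵥ v) + v ⬝ᵥ N *ᵥ v := by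
    intro a M N v
    rw [Matrix.add_mulVec, dotProduct_add, Matrix.smul_mulVec, dotProduct_smul, smul_eq_mul]
  have hs₁ : Convex ℝ s := by
    intro M hM N hN a b ha hb hab
    intro v hv
    have h1 : v ⬝ᵥ (a • M + b • N) *ᵥ v = a * (v ⬝ᵥ M *ᵥ v) + b * (v ⬝ᵥ N *ᵥ v) := by
      rw [hquad, Matrix.smul_mulVec, dotProduct_smul, smul_eq_mul]
    rw [h1]
    rcases eq_or_lt_of_le ha with ha' | ha'
    · have hb1 : b = 1 := by linarith
      rw [← ha', hb1]; simpa using hN v hv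
    · have := hM v hv
      have hbn : 0 ≤ b * (v ⬝ᵥ N *ᵥ v) := mul_nonneg hb (hN v hv).le
      nlinarith
  have hs₂ : IsOpen s := isOpen_posdefset hα
  set t : Set (Matrix (Fin α) (Fin α) ℝ) := Set.range (pencilEval A0 A) with htdef
  have ht : Convex ℝ t := by
    rintro _ ⟨x, rfl⟩ _ ⟨y, rfl⟩ a b ha hb hab
    refine ⟨a • x + b • y, ?_⟩
    unfold pencilEval
    ext i j
    simp only [Matrix.add_apply, Matrix.sum_apply, Matrix.smul_apply, Pi.add_apply,
      Pi.smul_apply, smul_eq_mul]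
    have e1 : ∑ k, (a * x k + b * y k) * A k i j
        = a * ∑ k, x k * A k i j + b * ∑ k, y k * A k i j := by
      rw [Finset.mul_sum, Finset.mul_sum, ← Finset.sum_add_distrib]
      exact Finset.sum_congr rfl fun k _ => by ring
    rw [e1]
    linear_combination (A0 i j) * hab.symm
  have disj : Disjoint s t := by
    rw [Set.disjoint_left]
    rintro M hMs ⟨x, rfl⟩
    refine hnoPD x (Matrix.PosDef.of_dotProduct_mulVec_pos ?_ ?_)
    · rw [Matrix.IsHermitian, conjTranspose_eq_transpose_of_trivial]
      unfold pencilEval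
      rw [Matrix.transpose_add, Matrix.transpose_sum]
      simp only [Matrix.transpose_smul]
      rw [hA0.eq]
      congr 1
      exact Finset.sum_congr rfl fun i _ => by rw [(hA i).eq]
    · intro v hv
      have := hMs v hv
      simpa using this
  obtain ⟨f, u, hfs, hft⟩ := geometric_hahn_banach_open hs₁ hs₂ ht disj
  have hsle : ∀ M ∈ s, f M ≤ 0 := by
    intro M hM
    by_contra hpos
    push_neg at hpos
    have hts : ((|u| + 1) / f M) • M ∈ s := by
      intro v hv
      have h1 : v ⬝ᵥ (((|u| + 1) / f M) • M) *ᵥ v = ((|u| + 1) / f M) * (v ⬝ᵥ M *ᵥ v) := by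
        rw [Matrix.smul_mulVec, dotProduct_smul, smul_eq_mul]
      rw [h1]
      have := hM v hv
      have hq : 0 < (|u| + 1) / f M := by positivity
      positivity
    have h2 := hfs _ hts
    rw [_root_.map_smul, smul_eq_mul, div_mul_cancel₀ _ hpos.ne'] at h2
    have : u ≤ |u| := le_abs_self u
    linarith
  have hI : (1 : Matrix (Fin α) (Fin α) ℝ) ∈ s := by
    intro v hv
    rw [Matrix.one_mulVec]
    exact dotProduct_self_pos' hv
  have hf1 : f 1 ≤ 0 := hsle _ hI
  have hepsI : ∀ ε : ℝ, 0 < ε → (ε • (1 : Matrix (Fin α) (Fin α) ℝ)) ∈ s := by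
    intro ε hε v hv
    rw [Matrix.smul_mulVec, dotProduct_smul, smul_eq_mul, Matrix.one_mulVec]
    exact mul_pos hε (dotProduct_self_pos' hv)
  have hu0 : 0 ≤ u := by
    by_contra hu
    push_neg at hu
    rcases eq_or_lt_of_le hf1 with hf1' | hf1'
    · have := hfs _ (hepsI 1 one_pos)
      rw [one_smul, hf1'] at this
      linarith
    · have hne : f 1 ≠ 0 := hf1'.ne
      have hε : 0 < u / (2 * f 1) := div_pos_of_neg_of_neg hu (by linarith)
      have := hfs _ (hepsI _ hε)
      rw [_root_.map_smul, smul_eq_mul] at this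
      have heq : u / (2 * f 1) * f 1 = u / 2 := by
        field_simp
      rw [heq] at this
      linarith
  have hpe : ∀ x : Fin n → ℝ, f (pencilEval A0 A x) = f A0 + ∑ i, x i * f (A i) := by
    intro x
    unfold pencilEval
    rw [map_add, map_sum]
    congr 1
    exact Finset.sum_congr rfl fun i _ => by rw [_root_.map_smul, smul_eq_mul]
  have hPSD : ∀ B, Matrix.PosSemidef B → f B ≤ 0 := by
    intro B hB
    have key : ∀ ε : ℝ, 0 < ε → f B ≤ ε * (-f 1) := by
      intro ε hε
      have hmem : B + ε • (1 : Matrix (Fin α) (Fin α) ℝ) ∈ s := by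
        intro v hv
        have h1 : v ⬝ᵥ (B + ε • (1 : Matrix (Fin α) (Fin α) ℝ)) *ᵥ v
            = v ⬝ᵥ B *ᵥ v + ε * (v ⬝ᵥ v) := by
          rw [Matrix.add_mulVec, dotProduct_add, Matrix.smul_mulVec, dotProduct_smul,
            smul_eq_mul, Matrix.one_mulVec]
        rw [h1]
        have h2 : 0 ≤ v ⬝ᵥ B *ᵥ v := by simpa using (Matrix.posSemidef_iff_dotProduct_mulVec.mp hB).2 v
        have h3 := dotProduct_self_pos' hv
        nlinarith
      have := hsle _ hmem
      rw [map_add, _root_.map_smul, smul_eq_mul] at this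
      linarith
    by_contra hpos
    push_neg at hpos
    rcases le_or_gt (-f 1) 0 with hc | hc
    · have := key 1 one_pos
      nlinarith
    · have hne : f 1 ≠ 0 := by intro h; rw [h] at hc; simp at hc
      have hε : 0 < f B / (2 * (-f 1)) := by positivity
      have := key _ hε
      have heq : f B / (2 * (-f 1)) * (-f 1) = f B / 2 := by
        field_simp
      rw [heq] at this
      linarith
  have hlin : ∀ j, f (A j) = 0 := by
    intro j
    have hx : ∀ c : ℝ, u ≤ f A0 + c * f (A j) := by
      intro c
      have hmem : pencilEval A0 A (c • (Pi.single j 1 : Fin n → ℝ)) ∈ t := ⟨_, rfl⟩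
      have := hft _ hmem
      rw [hpe] at this
      have hsum : ∑ i, (c • (Pi.single j 1 : Fin n → ℝ)) i * f (A i) = c * f (A j) := by
        rw [Finset.sum_eq_single j]
        · simp
        · intro i _ hij
          simp [Pi.single_eq_of_ne hij]
        · simp
      rw [hsum] at this
      exact this
    by_contra hc
    have h1 := hx ((u - f A0 - 1) / f (A j))
    rw [div_mul_cancel₀ _ hc] at h1
    linarith
  have hA0ge : u ≤ f A0 := by
    have hmem : pencilEval A0 A 0 ∈ t := ⟨0, rfl⟩
    have := hft _ hmem
    rw [hpe] at this
    simpa using this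
  exact ⟨f, hPSD, hlin, u, hu0, hA0ge, hfs _ hI⟩

end Aux

/-- For a weakly infeasible or weakly feasible pencil, there exist nonzero vectors
`u₁,…,u_k` with `∑ᵢ uᵢ^* A uᵢ = 0` as a polynomial. -/
theorem stmt_3 {n α : ℕ} (A0 : Matrix (Fin α) (Fin α) ℝ)
    (A : Fin n → Matrix (Fin α) (Fin α) ℝ) (hA0 : A0.IsSymm) (hA : ∀ i, (A i).IsSymm)
    (h : ((∀ x : Fin n → ℝ, ¬ (pencilEval A0 A x).PosSemidef) ∧ ¬ StronglyInfeasible A0 A)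
       ∨ ((∃ x : Fin n → ℝ, (pencilEval A0 A x).PosSemidef)
            ∧ ∀ x : Fin n → ℝ, ¬ (pencilEval A0 A x).PosDef)) :
    ∃ (k : ℕ), 1 ≤ k ∧ ∃ u : Fin k → Fin α → ℝ, (∀ i, u i ≠ 0) ∧
      (∑ i, quadForm (pencilPoly A0 A) (fun a => C (u i a))) = 0 := by
  classical
  by_cases hα : α = 0
  · exfalso
    have hPD : ∀ M : Matrix (Fin α) (Fin α) ℝ, M.PosDef := by
      subst hα
      intro M
      constructor
      · ext i j; exact i.elim0
      · intro x hx
        exact absurd (Finsupp.ext fun i => i.elim0) hx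
    rcases h with ⟨h1, _⟩ | ⟨_, h2⟩
    · exact h1 0 (hPD _).posSemidef
    · exact h2 0 (hPD _)
  · have hnoPD : ∀ x, ¬ (pencilEval A0 A x).PosDef := by
      rcases h with ⟨h1, _⟩ | ⟨_, h2⟩
      · exact fun x hx => h1 x hx.posSemidef
      · exact h2
    obtain ⟨f, hPSDf, hlin, u, hu0, huA0, hf1u⟩ := sep_lemma hα A0 A hA0 hA hnoPD
    have hpe : ∀ x : Fin n → ℝ, f (pencilEval A0 A x) = f A0 := by
      intro x
      unfold pencilEval
      rw [map_add, map_sum]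
      have hz : ∑ i, f (x i • A i) = 0 := by
        refine Finset.sum_eq_zero fun i _ => ?_
        rw [_root_.map_smul, hlin i, smul_zero]
      rw [hz, add_zero]
    have hA0le : f A0 ≤ 0 := by
      rcases h with ⟨h1, h2⟩ | ⟨⟨x0, hx0⟩, _⟩
      · unfold StronglyInfeasible at h2
        push_neg at h2
        have key : ∀ ε : ℝ, 0 < ε → f A0 ≤ ε := by
          intro ε hε
          let g : @ContinuousLinearMap ℝ ℝ _ _ (RingHom.id ℝ) (Matrix (Fin α) (Fin α) ℝ)
              (Matrix.frobeniusNormedAddCommGroup (α := ℝ)).toUniformSpace.toTopologicalSpace _ ℝ _ _ _ _ :=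
            ⟨f.toLinearMap, by
              let _ : TopologicalSpace (Matrix (Fin α) (Fin α) ℝ) :=
                (Matrix.frobeniusNormedAddCommGroup (α := ℝ)).toUniformSpace.toTopologicalSpace
              exact f.toLinearMap.continuous_of_finiteDimensional⟩
          have hε' : 0 < ε / (‖g‖ + 1) := by positivity
          obtain ⟨x, B, hB, hd⟩ := h2 (ε / (‖g‖ + 1)) hε'
          have e1 : f A0 = f B + f (pencilEval A0 A x - B) := by
            rw [map_sub, ← hpe x]; ring
          have e2 : f (pencilEval A0 A x - B) ≤ ‖g‖ * ‖pencilEval A0 A x - B‖ := by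
            calc f (pencilEval A0 A x - B) ≤ |f (pencilEval A0 A x - B)| := le_abs_self _
              _ = ‖g (pencilEval A0 A x - B)‖ := rfl
              _ ≤ ‖g‖ * ‖pencilEval A0 A x - B‖ := g.le_opNorm _
          have e3 : ‖pencilEval A0 A x - B‖ < ε / (‖g‖ + 1) := by
            rw [← dist_eq_norm]; exact hd
          have e4 : ‖g‖ * ‖pencilEval A0 A x - B‖ ≤ ‖g‖ * (ε / (‖g‖ + 1)) :=
            mul_le_mul_of_nonneg_left e3.le (norm_nonneg g)
          have e5 : ‖g‖ * (ε / (‖g‖ + 1)) ≤ ε := by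
            rw [mul_div_assoc', div_le_iff₀ (by positivity)]
            nlinarith [norm_nonneg g]
          have := hPSDf B hB
          linarith
        by_contra hgt
        push_neg at hgt
        have := key (f A0 / 2) (by linarith)
        linarith
      · have hb := hPSDf _ hx0
        rw [hpe x0] at hb
        exact hb
    have hfA0 : f A0 = 0 := le_antisymm hA0le (le_trans hu0 huA0)
    have hf1 : f 1 < 0 := by
      have : u ≤ 0 := by rw [← hfA0]; exact huA0
      linarith
    set W : Matrix (Fin α) (Fin α) ℝ := Matrix.of fun i j => f (Matrix.single i j 1) with hWdef
    have hrep : ∀ M : Matrix (Fin α) (Fin α) ℝ, f M = ∑ i, ∑ j, M i j * W i j := by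
      intro M
      conv_lhs => rw [matrix_eq_sum_single M]
      rw [map_sum]
      refine Finset.sum_congr rfl fun i _ => ?_
      rw [map_sum]
      refine Finset.sum_congr rfl fun j _ => ?_
      have e : Matrix.single i j (M i j) = (M i j) • Matrix.single i j (1:ℝ) := by
        rw [Matrix.smul_single, smul_eq_mul, mul_one]
      rw [e, _root_.map_smul, smul_eq_mul]
      rfl
    set Wsym : Matrix (Fin α) (Fin α) ℝ := -(W + Wᵀ) with hWsymdef
    have hWsym_entry : ∀ i j, Wsym i j = -(W i j + W j i) := by
      intro i j
      simp [hWsymdef, Matrix.neg_apply, Matrix.add_apply, Matrix.transpose_apply]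
    have hsymsum : ∀ M : Matrix (Fin α) (Fin α) ℝ, M.IsSymm →
        ∑ j, ∑ k, M j k * Wsym j k = -2 * f M := by
      intro M hM
      have hswap : ∑ j, ∑ k, M j k * W k j = ∑ j, ∑ k, M j k * W j k := by
        rw [Finset.sum_comm]
        exact Finset.sum_congr rfl fun j _ => Finset.sum_congr rfl fun k _ => by
          rw [hM.apply j k]
      calc ∑ j, ∑ k, M j k * Wsym j k
          = ∑ j, ∑ k, (-(M j k * W j k) - M j k * W k j) := by
            refine Finset.sum_congr rfl fun j _ => Finset.sum_congr rfl fun k _ => ?_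
            rw [hWsym_entry]; ring
        _ = -(∑ j, ∑ k, M j k * W j k) - ∑ j, ∑ k, M j k * W k j := by
            simp only [Finset.sum_sub_distrib, Finset.sum_neg_distrib]
        _ = -2 * f M := by rw [hswap, hrep M]; ring
    have hvvSymm : ∀ x : Fin α → ℝ, (vecMulVec x x).IsSymm := by
      intro x
      ext i j
      simp [Matrix.transpose_apply, vecMulVec_apply, mul_comm]
    have hvvPSD : ∀ x : Fin α → ℝ, (vecMulVec x x).PosSemidef := by
      intro x
      refine Matrix.PosSemidef.of_dotProduct_mulVec_nonneg ?_ ?_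
      · rw [Matrix.IsHermitian, conjTranspose_eq_transpose_of_trivial]
        exact hvvSymm x
      · intro y
        have e : star y ⬝ᵥ (vecMulVec x x) *ᵥ y = (x ⬝ᵥ y) * (x ⬝ᵥ y) := by
          rw [star_trivial, quad_expand]
          simp only [vecMulVec_apply]
          rw [dotProduct, Finset.sum_mul_sum]
          exact Finset.sum_congr rfl fun j _ => Finset.sum_congr rfl fun k _ => by ring
        rw [e]
        exact mul_self_nonneg _
    have hWsymPSD : Wsym.PosSemidef := by
      refine Matrix.PosSemidef.of_dotProduct_mulVec_nonneg ?_ ?_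
      · rw [Matrix.IsHermitian, conjTranspose_eq_transpose_of_trivial]
        ext i j
        rw [Matrix.transpose_apply, hWsym_entry, hWsym_entry]
        ring
      · intro y
        rw [star_trivial, quad_expand]
        have e : ∑ i, ∑ j, Wsym i j * (y i * y j)
            = ∑ i, ∑ j, (vecMulVec y y) i j * Wsym i j :=
          Finset.sum_congr rfl fun i _ => Finset.sum_congr rfl fun j _ => by
            rw [vecMulVec_apply]; ring
        rw [e, hsymsum _ (hvvSymm y)]
        have := hPSDf _ (hvvPSD y)
        linarith
    obtain ⟨B, hB⟩ : ∃ B : Matrix (Fin α) (Fin α) ℝ, Wsym = Bᴴ * B := by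
      open scoped MatrixOrder in
      exact ⟨CFC.sqrt Wsym, by
        rw [(CFC.sqrt_nonneg Wsym).posSemidef.1.eq, CFC.sqrt_mul_sqrt_self Wsym hWsymPSD.nonneg]⟩
    have key2 : ∀ M : Matrix (Fin α) (Fin α) ℝ, M.IsSymm →
        ∑ i, B i ⬝ᵥ M *ᵥ B i = -2 * f M := by
      intro M hM
      have e1 : ∀ j k, M j k * Wsym j k = ∑ i, M j k * (B i j * B i k) := by
        intro j k
        rw [hB, Matrix.mul_apply, Finset.mul_sum]
        exact Finset.sum_congr rfl fun i _ => by
          rw [Matrix.conjTranspose_apply, star_trivial]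
      calc ∑ i, B i ⬝ᵥ M *ᵥ B i
          = ∑ i, ∑ j, ∑ k, M j k * (B i j * B i k) :=
            Finset.sum_congr rfl fun i _ => by rw [quad_expand]
        _ = ∑ j, ∑ i, ∑ k, M j k * (B i j * B i k) := Finset.sum_comm
        _ = ∑ j, ∑ k, ∑ i, M j k * (B i j * B i k) :=
            Finset.sum_congr rfl fun j _ => Finset.sum_comm
        _ = ∑ j, ∑ k, M j k * Wsym j k :=
            Finset.sum_congr rfl fun j _ => Finset.sum_congr rfl fun k _ => (e1 j k).symm
        _ = -2 * f M := hsymsum M hM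
    have hIsum : 0 < ∑ i, B i ⬝ᵥ B i := by
      have e : ∑ i, B i ⬝ᵥ (1 : Matrix (Fin α) (Fin α) ℝ) *ᵥ B i = ∑ i, B i ⬝ᵥ B i :=
        Finset.sum_congr rfl fun i _ => by rw [Matrix.one_mulVec]
      have h2 := key2 _ Matrix.isSymm_one
      rw [e] at h2
      rw [h2]
      linarith
    set T : Finset (Fin α) := Finset.univ.filter (fun i => B i ≠ 0) with hT
    have hTzero : ∀ i, i ∉ T → B i = 0 := by
      intro i hi
      by_contra hne
      exact hi (Finset.mem_filter.mpr ⟨Finset.mem_univ i, hne⟩)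
    have hTne : T.Nonempty := by
      by_contra hc
      rw [Finset.not_nonempty_iff_eq_empty] at hc
      have hz : ∑ i, B i ⬝ᵥ B i = 0 := by
        refine Finset.sum_eq_zero fun i _ => ?_
        have hBi : B i = 0 := hTzero i (by rw [hc]; exact Finset.notMem_empty i)
        rw [hBi]
        simp
      linarith
    refine ⟨T.card, Finset.card_pos.mpr hTne, ?_⟩
    set e := T.equivFin with he
    refine ⟨fun m => B ((e.symm m : Fin α)), ?_, ?_⟩
    · intro m
      exact (Finset.mem_filter.mp (e.symm m).2).2
    · have htrans : ∀ {γ : Type} [AddCommMonoid γ] (g : (Fin α → ℝ) → γ), g 0 = 0 →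
          ∑ m : Fin T.card, g (B ((e.symm m : Fin α))) = ∑ i, g (B i) := by
        intro γ _ g hg
        calc ∑ m : Fin T.card, g (B ((e.symm m : Fin α)))
            = ∑ t : T, g (B (t : Fin α)) := e.symm.sum_comp (fun t : T => g (B (t : Fin α)))
          _ = ∑ i ∈ T, g (B i) := Finset.sum_coe_sort T (fun i => g (B i))
          _ = ∑ i, g (B i) := Finset.sum_subset (Finset.subset_univ T)
              (fun i _ hi => by rw [hTzero i hi, hg])
      rw [htrans (fun w => quadForm (pencilPoly A0 A) (fun a => C (w a))) (by
        have hzv : (fun a => C ((0 : Fin α → ℝ) a)) = (0 : Fin α → RP n) := by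
          funext a; simp
        show quadForm (pencilPoly A0 A) (fun a => C ((0 : Fin α → ℝ) a)) = 0
        rw [hzv]
        simp [quadForm])]
      apply MvPolynomial.funext
      intro x
      rw [map_zero, map_sum]
      have heval : ∀ w : Fin α → ℝ,
          MvPolynomial.eval x (quadForm (pencilPoly A0 A) (fun a => C (w a)))
            = w ⬝ᵥ (pencilEval A0 A x) *ᵥ w := by
        intro w
        unfold quadForm pencilPoly pencilEval
        simp only [mulVec, dotProduct, Matrix.add_apply, Matrix.sum_apply, Matrix.smul_apply,
          Matrix.map_apply, smul_eq_mul, map_sum, _root_.map_mul, map_add,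
          MvPolynomial.eval_C, MvPolynomial.eval_X]
      rw [Finset.sum_congr rfl (fun i _ => heval (B i))]
      have hsymP : (pencilEval A0 A x).IsSymm := by
        unfold pencilEval
        rw [Matrix.IsSymm, Matrix.transpose_add, Matrix.transpose_sum]
        simp only [Matrix.transpose_smul]
        rw [hA0.eq]
        congr 1
        exact Finset.sum_congr rfl fun i _ => by rw [(hA i).eq]
      rw [key2 _ hsymP, hpe x, hfA0]
      ring
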